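/- arXiv:1601.00502 — 2 statements merged into one kernel-verified Lean document; each statement's English description precedes it below -/
import Mathlib

section
/- For every natural number k one has F(k + M) − F(k) = 2·D·(g − 1). (This is the computational content of Corollary 5.5 of the paper: by the Chevalley–Weil formula, for a faithful action of a finite group G of order M on a curve of genus g, the multiplicity of any irreducible representation ρ of dimension D in H⁰(ω_C^{k+|G|}) exceeds its multiplicity in H⁰(ω_C^{k}) by exactly 2·(dim ρ)·(g−1), independently of the action; hence the representation-type decompositions 𝒟^G_{k,g} and 𝒟^G_{k+|G|,g} of the moduli space coincide.) -/
/-- (Corollary 5.5, k ≥ 2 part, of "G-marked moduli spaces".)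
For the Chevalley–Weil value
`F k = (2k/M)·D·(g−1) − D·(g'−1) − Σᵢ Σ_{α<mᵢ} N i α · [−α−k]_{mᵢ} / mᵢ`,
where `M ≥ 1` and each `mᵢ` is a positive divisor of `M`, one has
`F (k + M) − F k = 2·D·(g−1)` for every natural number `k`. -/
theorem chevalleyWeil_periodicity
    (M : ℕ) (hM : 1 ≤ M)
    (g g' : ℤ) (D : ℕ) (r : ℕ)
    (m : Fin r → ℕ) (hm : ∀ i, 0 < m i) (hdvd : ∀ i, m i ∣ M)
    (N : Fin r → ℕ → ℕ)
    (F : ℕ → ℚ)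
    (hF : ∀ k : ℕ, F k =
      (2 * (k : ℚ) / (M : ℚ)) * (D : ℚ) * ((g : ℚ) - 1)
        - (D : ℚ) * ((g' : ℚ) - 1)
        - ∑ i : Fin r, ∑ α ∈ Finset.range (m i),
            (N i α : ℚ) * ((((-(α : ℤ) - (k : ℤ)) % (m i : ℤ)) : ℤ) : ℚ) / (m i : ℚ)) :
    ∀ k : ℕ, F (k + M) - F k = 2 * (D : ℚ) * ((g : ℚ) - 1) := by
  intro k
  have hsum : ∀ i : Fin r, ∀ α ∈ Finset.range (m i),
      (N i α : ℚ) * ((((-(α : ℤ) - ((k + M : ℕ) : ℤ)) % (m i : ℤ)) : ℤ) : ℚ) / (m i : ℚ)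
        = (N i α : ℚ) * ((((-(α : ℤ) - (k : ℤ)) % (m i : ℤ)) : ℤ) : ℚ) / (m i : ℚ) := by
    intro i α _
    have h : (-(α : ℤ) - ((k + M : ℕ) : ℤ)) % (m i : ℤ)
        = (-(α : ℤ) - (k : ℤ)) % (m i : ℤ) := by
      have hd : (m i : ℤ) ∣ (M : ℤ) := Int.natCast_dvd_natCast.mpr (hdvd i)
      have : (-(α : ℤ) - ((k + M : ℕ) : ℤ)) = (-(α : ℤ) - (k : ℤ)) + (-(M : ℤ)) := by
        push_cast; ring
      obtain ⟨c, hc⟩ := hd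
      rw [this, hc,
        show (-(α : ℤ) - (k : ℤ)) + (-((m i : ℤ) * c)) = (-(α : ℤ) - (k : ℤ)) + (m i : ℤ) * (-c) by ring]
      exact Int.add_mul_emod_self_left _ _ _
    rw [h]
  rw [hF (k + M), hF k]
  rw [Finset.sum_congr rfl (fun i _ => Finset.sum_congr rfl (hsum i))]
  have hM' : (M : ℚ) ≠ 0 := by positivity
  push_cast
  field_simp
  ring
end

section
/- Assume in addition that Σ_{α=0}^{m_i−1} N_{i,α} = D for each i = 1, …, r, that the Riemann–Hurwitz relation 2(g−1)/M = 2(g'−1) + Σ_{i=1}^{r} (1 − 1/m_i) holds in ℚ, and let σ ∈ {0,1}. Define F₁ = D·(g'−1) + Σ_{i=1}^{r} Σ_{α=1}^{m_i−1} α·N_{i,α}/m_i + σ ∈ ℚ. Then F(1 + M) − F₁ = 2·D·(g−1) − σ. (This is the k = 1 part of Corollary 5.5 of the paper: F₁ is the value ⟨χ_{φ_1}, χ_ρ⟩ given by the degree-one Chevalley–Weil formula, where σ = 1 if ρ is trivial and σ = 0 otherwise, and F(1+M) is the multiplicity ⟨χ_{φ_{1+|G|}}, χ_ρ⟩; their difference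 2·(dim ρ)·(g−1) − σ is independent of the action.) -/
/-- (Corollary 5.5, k = 1 part, of "G-marked moduli spaces".)
With the Chevalley–Weil value `F` as before, assuming each eigenvalue-multiplicity
family sums to `D` (`Σ_{α<mᵢ} N i α = D`), the Riemann–Hurwitz relation
`2(g−1)/M = 2(g'−1) + Σᵢ (1 − 1/mᵢ)`, and `σ ∈ {0,1}`, setting
`F₁ = D·(g'−1) + Σᵢ Σ_{α=1}^{mᵢ−1} α·N i α/mᵢ + σ`, one has
`F (1 + M) − F₁ = 2·D·(g−1) − σ`. -/
theorem chevalleyWeil_periodicity_degree_one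
    (M : ℕ) (hM : 1 ≤ M)
    (g g' : ℤ) (D : ℕ) (r : ℕ)
    (m : Fin r → ℕ) (hm : ∀ i, 0 < m i) (hdvd : ∀ i, m i ∣ M)
    (N : Fin r → ℕ → ℕ)
    (F : ℕ → ℚ)
    (hF : ∀ k : ℕ, F k =
      (2 * (k : ℚ) / (M : ℚ)) * (D : ℚ) * ((g : ℚ) - 1)
        - (D : ℚ) * ((g' : ℚ) - 1)
        - ∑ i : Fin r, ∑ α ∈ Finset.range (m i),
            (N i α : ℚ) * ((((-(α : ℤ) - (k : ℤ)) % (m i : ℤ)) : ℤ) : ℚ) / (m i : ℚ))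
    (hN : ∀ i : Fin r, ∑ α ∈ Finset.range (m i), N i α = D)
    (hRH : 2 * ((g : ℚ) - 1) / (M : ℚ) =
      2 * ((g' : ℚ) - 1) + ∑ i : Fin r, (1 - 1 / (m i : ℚ)))
    (σ : ℚ) (hσ : σ = 0 ∨ σ = 1)
    (F₁ : ℚ)
    (hF₁ : F₁ = (D : ℚ) * ((g' : ℚ) - 1)
        + ∑ i : Fin r, ∑ α ∈ Finset.Ico 1 (m i),
            (α : ℚ) * (N i α : ℚ) / (m i : ℚ)
        + σ) :
    F (1 + M) - F₁ = 2 * (D : ℚ) * ((g : ℚ) - 1) - σ := by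

  have hM0 : (M:ℚ) ≠ 0 := Nat.cast_ne_zero.mpr (by omega)
  rw [hF, hF₁]
  have key : ∀ i : Fin r,
      (∑ α ∈ Finset.range (m i),
        (N i α : ℚ) * ((((-(α : ℤ) - ((1 + M : ℕ) : ℤ)) % (m i : ℤ)) : ℤ) : ℚ) / (m i : ℚ))
      + ∑ α ∈ Finset.Ico 1 (m i), (α : ℚ) * (N i α : ℚ) / (m i : ℚ)
      = (D : ℚ) * (1 - 1 / (m i : ℚ)) := by
    intro i
    have hmi : 0 < m i := hm i
    have hmQ : ((m i : ℚ)) ≠ 0 := by exact_mod_cast hmi.ne'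
    obtain ⟨t, ht⟩ := hdvd i
    have hmod : ∀ α ∈ Finset.range (m i),
        ((-(α : ℤ) - ((1 + M : ℕ) : ℤ)) % (m i : ℤ)) = (m i : ℤ) - 1 - α := by
      intro α hα
      simp only [Finset.mem_range] at hα
      have h1 : (-(α : ℤ) - ((1 + M : ℕ) : ℤ)) = ((m i : ℤ) - 1 - α) + (m i : ℤ) * (-1 - t) := by
        push_cast [ht]; ring
      rw [h1, Int.add_mul_emod_self_left, Int.emod_eq_of_lt (by omega) (by omega)]
    have h2 : (∑ α ∈ Finset.range (m i),
        (N i α : ℚ) * ((((-(α : ℤ) - ((1 + M : ℕ) : ℤ)) % (m i : ℤ)) : ℤ) : ℚ) / (m i : ℚ))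
        = ∑ α ∈ Finset.range (m i), (N i α : ℚ) * ((m i : ℚ) - 1 - α) / (m i : ℚ) := by
      refine Finset.sum_congr rfl fun α hα => ?_
      rw [hmod α hα]; push_cast; ring
    have h3 : ∑ α ∈ Finset.Ico 1 (m i), (α : ℚ) * (N i α : ℚ) / (m i : ℚ)
        = ∑ α ∈ Finset.range (m i), (α : ℚ) * (N i α : ℚ) / (m i : ℚ) := by
      rw [Finset.range_eq_Ico, Finset.sum_eq_sum_Ico_succ_bot hmi]
      simp
    rw [h2, h3, ← Finset.sum_add_distrib]
    have h4 : ∑ α ∈ Finset.range (m i),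
        ((N i α : ℚ) * ((m i : ℚ) - 1 - α) / (m i : ℚ) + (α : ℚ) * (N i α : ℚ) / (m i : ℚ))
        = ∑ α ∈ Finset.range (m i), (N i α : ℚ) * (1 - 1 / (m i : ℚ)) := by
      refine Finset.sum_congr rfl fun α hα => ?_
      field_simp
      ring
    rw [h4, ← Finset.sum_mul]
    have : (∑ α ∈ Finset.range (m i), (N i α : ℚ)) = (D : ℚ) := by
      exact_mod_cast congrArg (Nat.cast : ℕ → ℚ) (hN i)
    rw [this]
  have hsumeq : (∑ i : Fin r, ∑ α ∈ Finset.range (m i),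
        (N i α : ℚ) * ((((-(α : ℤ) - ((1 + M : ℕ) : ℤ)) % (m i : ℤ)) : ℤ) : ℚ) / (m i : ℚ))
      + ∑ i : Fin r, ∑ α ∈ Finset.Ico 1 (m i), (α : ℚ) * (N i α : ℚ) / (m i : ℚ)
      = (D : ℚ) * ∑ i : Fin r, (1 - 1 / (m i : ℚ)) := by
    rw [← Finset.sum_add_distrib, Finset.mul_sum]
    exact Finset.sum_congr rfl fun i _ => key i
  have hS : ∑ i : Fin r, (1 - 1 / (m i : ℚ))
      = 2 * ((g : ℚ) - 1) / (M : ℚ) - 2 * ((g' : ℚ) - 1) := by linarith [hRH]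
  rw [hS] at hsumeq
  push_cast at hsumeq ⊢
  field_simp at hsumeq ⊢
  linarith [hsumeq]
end
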